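/- If a finite Wang tileset τ admits a tiling f of the plane in which some tile t appears at most once in each row, then τ \ {t} admits a tiling of the plane. -/

import Mathlib

structure WangTile (C : Type) where
  e : C
  w : C
  n : C
  s : C
deriving DecidableEq

def IsTiling {C : Type} (τ : Set (WangTile C)) (f : ℤ → ℤ → WangTile C) : Prop :=
  (∀ i j, f i j ∈ τ) ∧ (∀ i j, (f i j).e = (f (i+1) j).w) ∧
    (∀ i j, (f i j).n = (f i (j+1)).s)

instance {C : Type} [Finite C] : Finite (WangTile C) :=
  Finite.of_injective (fun w : WangTile C => (w.e, w.w, w.n, w.s))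
    (by rintro ⟨a,b,c,d⟩ ⟨a',b',c',d'⟩ h; simpa using h)

theorem stmt14 {C : Type} [Fintype C] [DecidableEq C] (τ : Finset (WangTile C))
    (f : ℤ → ℤ → WangTile C) (hf : IsTiling (↑τ : Set (WangTile C)) f)
    (t : WangTile C)
    (honce : ∀ j i i' : ℤ, f i j = t → f i' j = t → i = i') :
    ∃ g, IsTiling (↑τ : Set (WangTile C)) g ∧ ∀ i j, g i j ≠ t := by
  classical
  -- position of t in a row, if any
  set P : ℤ → ℤ := fun j => if h : ∃ p, f p j = t then h.choose else 0 with hP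
  -- choose shifts avoiding t on larger and larger squares
  have hs : ∀ n : ℕ, ∃ s : ℤ, ∀ i j : ℤ, |i| ≤ (n:ℤ) → |j| ≤ (n:ℤ) → f (i + s) j ≠ t := by
    intro n
    obtain ⟨s, hsmem⟩ := Infinite.exists_notMem_finset
      ((Finset.Icc (-(n:ℤ)) n ×ˢ Finset.Icc (-(n:ℤ)) n).image fun q => P q.2 - q.1)
    refine ⟨s, fun i j hi hj hft => ?_⟩
    have hex : ∃ p, f p j = t := ⟨i + s, hft⟩
    have hPj : f (P j) j = t := by simp only [hP, dif_pos hex]; exact hex.choose_spec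
    have : i + s = P j := honce j _ _ hft hPj
    apply hsmem
    refine Finset.mem_image.2 ⟨(i, j), ?_, by simp only; omega⟩
    simp [abs_le] at hi hj
    simp [hi.1, hi.2, hj.1, hj.2]
  choose s hs using hs
  set U := Filter.hyperfilter ℕ with hU
  -- for each i j, the ultrafilter limit of f (i + s n) j
  have key : ∀ i j : ℤ, ∃ a : WangTile C, {n : ℕ | f (i + s n) j = a} ∈ U := by
    intro i j
    obtain ⟨a, ha⟩ := Ultrafilter.eq_pure_of_finite (U.map fun n => f (i + s n) j)
    refine ⟨a, ?_⟩
    have : {a} ∈ U.map fun n => f (i + s n) j := by rw [ha]; simp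
    exact this
  choose g hg using key
  have hUne : (U : Filter ℕ).NeBot := Ultrafilter.neBot U
  -- helper: two U-large sets intersect
  have inter : ∀ {A B : Set ℕ}, A ∈ U → B ∈ U → ∃ n, n ∈ A ∧ n ∈ B := by
    intro A B hA hB
    have := Filter.inter_mem hA hB
    obtain ⟨n, hn⟩ := Filter.nonempty_of_mem this
    exact ⟨n, hn.1, hn.2⟩
  refine ⟨g, ⟨?_, ?_, ?_⟩, ?_⟩
  · intro i j
    obtain ⟨n, hn⟩ := Filter.nonempty_of_mem (hg i j)
    rw [← hn]
    exact hf.1 _ _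
  · intro i j
    obtain ⟨n, h1, h2⟩ := inter (hg i j) (hg (i+1) j)
    simp only [Set.mem_setOf_eq] at h1 h2
    rw [show i + 1 + s n = i + s n + 1 by ring] at h2
    rw [← h1, ← h2]; exact hf.2.1 (i + s n) j
  · intro i j
    obtain ⟨n, h1, h2⟩ := inter (hg i j) (hg i (j+1))
    rw [← h1, ← h2]; exact hf.2.2 (i + s n) j
  · intro i j hgt
    have hcof : {n : ℕ | f (i + s n) j ≠ t} ∈ U := by
      apply Filter.hyperfilter_le_cofinite
      rw [Filter.mem_cofinite]
      apply Set.Finite.subset (Set.finite_Iio (max |i| |j|).toNat)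
      intro n hn
      simp only [Set.mem_compl_iff, Set.mem_setOf_eq, not_not] at hn
      by_contra hlt
      simp only [Set.mem_Iio, not_lt] at hlt
      exact hs n i j (by omega) (by omega) hn
    obtain ⟨n, h1, h2⟩ := inter (hg i j) hcof
    rw [hgt] at h1
    exact h2 h1
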